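/- (Lundberg's equation, left solution.) For v ∈ (0,1] let G̃_v := Σ_{n=0}^∞ v^n · M̃(n,1), where M̃(n,1) is the N×N matrix whose (i,j)-entry is the probability of {τ̃_1^+ = n, J̃_n = j} in the time-reversed model with initial distribution δ_i. Then the matrix R_v := Δ_π^{−1} · G̃_v^T · Δ_π satisfies R_v = v · Σ_{m=0}^∞ R_v^m · Λ(m), the series converging entrywise. -/

import Mathlib

open scoped BigOperators ENNReal Classical

noncomputable section

namespace CMB

/-- The weight that the compound Markov binomial model with horizon `n`, jump matrices `Λ`
and initial distribution `μ` assigns to the path `(J, C)`. -/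
def pathWeight {N : ℕ} (Λ : ℕ → Matrix (Fin N) (Fin N) ℝ) (μ : Fin N → ℝ) (n : ℕ)
    (J : Fin (n + 1) → Fin N) (C : Fin n → ℕ) : ℝ :=
  μ (J 0) * ∏ k : Fin n, Λ (C k) (J k.castSucc) (J k.succ)

/-- The probability of the event `A` in the horizon-`n` compound Markov binomial model:
the sum of the weights of the paths belonging to the event. -/
def prob {N : ℕ} (Λ : ℕ → Matrix (Fin N) (Fin N) ℝ) (μ : Fin N → ℝ) (n : ℕ)
    (A : (Fin (n + 1) → Fin N) → (Fin n → ℕ) → Prop) : ℝ :=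
  ∑' p : { p : (Fin (n + 1) → Fin N) × (Fin n → ℕ) // A p.1 p.2 },
    pathWeight Λ μ n p.1.1 p.1.2

/-- Partial sums `S_k = C_1 + ⋯ + C_k` of the claims (`C i` is claim number `i+1`). -/
def S {n : ℕ} (C : Fin n → ℕ) (k : ℕ) : ℕ :=
  ∑ j : Fin n, if (j : ℕ) < k then C j else 0

/-- Dirac initial distribution `δ_i`. -/
def delta {N : ℕ} (i : Fin N) : Fin N → ℝ := fun i' => if i' = i then 1 else 0

/-- `hitM Λ n a i j` is the probability, in the model with initial distribution `δ_i` and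
initial surplus `x = 0` (so `X_k = k - S_k`), of the event `{τ_a^+ = n, J_n = j}`,
i.e. `X_k < a` for all `k < n` and `X_n ≥ a` and `J_n = j`. -/
def hitM {N : ℕ} (Λ : ℕ → Matrix (Fin N) (Fin N) ℝ) (n a : ℕ) : Matrix (Fin N) (Fin N) ℝ :=
  fun i j => prob Λ (delta i) n fun J C =>
    (∀ k, k < n → (k : ℤ) - S C k < (a : ℤ)) ∧ (a : ℤ) ≤ (n : ℤ) - S C n ∧ J (Fin.last n) = j

/-- Jump matrices `Λ̃(m)`, with `λ̃_{ij}(m) = (π_j/π_i)·λ_{ji}(m)`, of the time-reversed model. -/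
def lamTilde {N : ℕ} (Λ : ℕ → Matrix (Fin N) (Fin N) ℝ) (π : Fin N → ℝ) :
    ℕ → Matrix (Fin N) (Fin N) ℝ := fun m i j => π j / π i * Λ m j i

/-- `Gser Λ v a` is the matrix `G_v(a) = Σ_{n=0}^∞ v^n · M(n,a)`, entrywise. -/
def Gser {N : ℕ} (Λ : ℕ → Matrix (Fin N) (Fin N) ℝ) (v : ℝ) (a : ℕ) :
    Matrix (Fin N) (Fin N) ℝ := fun i j => ∑' n : ℕ, v ^ n * hitM Λ n a i j

/-- `R_v := Δ_π⁻¹ · G̃_vᵀ · Δ_π`, where `G̃_v = Σ_n v^n M̃(n,1)` is computed in the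
time-reversed model. -/
def Rmat {N : ℕ} (Λ : ℕ → Matrix (Fin N) (Fin N) ℝ) (π : Fin N → ℝ) (v : ℝ) :
    Matrix (Fin N) (Fin N) ℝ := fun i j => π j / π i * Gser (lamTilde Λ π) v 1 j i

section Aux

variable {N : ℕ}

/-- ENNReal-valued path weight for initial state `i`. -/
def ewt (L : ℕ → Matrix (Fin N) (Fin N) ℝ≥0∞) (i : Fin N) (n : ℕ)
    (J : Fin (n + 1) → Fin N) (C : Fin n → ℕ) : ℝ≥0∞ :=
  (if J 0 = i then 1 else 0) * ∏ k : Fin n, L (C k) (J k.castSucc) (J k.succ)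

/-- The hitting event. -/
def hitEv (n a : ℕ) {N : ℕ} (j : Fin N) :
    Set ((Fin (n + 1) → Fin N) × (Fin n → ℕ)) :=
  {p | (∀ k, k < n → (k : ℤ) - S p.2 k < (a : ℤ)) ∧
      (a : ℤ) ≤ (n : ℤ) - S p.2 n ∧ p.1 (Fin.last n) = j}

/-- ENNReal hitting "probability". -/
def eHit (L : ℕ → Matrix (Fin N) (Fin N) ℝ≥0∞) (n a : ℕ) (i j : Fin N) : ℝ≥0∞ :=
  ∑' p : (Fin (n + 1) → Fin N) × (Fin n → ℕ),
    Set.indicator (hitEv n a j) (fun p => ewt L i n p.1 p.2) p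

lemma S_zero {n : ℕ} (C : Fin n → ℕ) : S C 0 = 0 := by
  simp [S]

lemma S_cons {n : ℕ} (m : ℕ) (C : Fin n → ℕ) (k : ℕ) :
    S (Fin.cons m C) (k + 1) = m + S C k := by
  rw [S, Fin.sum_univ_succ]
  simp only [Fin.cons_zero, Fin.cons_succ, Fin.val_succ, Fin.val_zero, S]
  congr 1
  · simp

lemma eHit_zero (L : ℕ → Matrix (Fin N) (Fin N) ℝ≥0∞) (a : ℕ) (i j : Fin N) :
    eHit L 0 a i j = (if a = 0 then (1 : Matrix (Fin N) (Fin N) ℝ≥0∞) else 0) i j := by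
  by_cases ha : a = 0
  · subst ha
    rw [eHit, tsum_eq_single (⟨fun _ => j, fun k => k.elim0⟩ :
        (Fin 1 → Fin N) × (Fin 0 → ℕ))]
    · have hmem : (⟨fun _ => j, fun k => k.elim0⟩ :
          (Fin 1 → Fin N) × (Fin 0 → ℕ)) ∈ hitEv 0 0 j := by
        refine ⟨fun k hk => absurd hk (by omega), ?_, rfl⟩
        simp [S_zero]
      rw [Set.indicator_of_mem hmem]
      simp [ewt, Matrix.one_apply, eq_comm]
    · intro p hp
      apply Set.indicator_of_notMem
      intro hmem
      apply hp
      obtain ⟨J, C⟩ := p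
      have hJ : J = fun _ => j := by
        funext x
        have : x = Fin.last 0 := Subsingleton.elim _ _
        rw [this]; exact hmem.2.2
      have hC : C = fun k => k.elim0 := by funext k; exact k.elim0
      simp [hJ, hC]
  · have : ∀ p : (Fin 1 → Fin N) × (Fin 0 → ℕ),
        Set.indicator (hitEv 0 a j) (fun p => ewt L i 0 p.1 p.2) p = 0 := by
      intro p
      apply Set.indicator_of_notMem
      rintro ⟨-, h2, -⟩
      rw [S_zero] at h2
      omega
    rw [eHit]
    simp only [this, tsum_zero]
    simp [ha]

/-- Recursively defined hitting matrices. -/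
def eM (L : ℕ → Matrix (Fin N) (Fin N) ℝ≥0∞) : ℕ → ℕ → Matrix (Fin N) (Fin N) ℝ≥0∞
  | 0, a => if a = 0 then 1 else 0
  | n + 1, a =>
    if a = 0 then 0 else
      Matrix.of fun i j => ∑' m, ∑ x, L m i x * eM L n (a - 1 + m) x j

lemma eM_zero (L : ℕ → Matrix (Fin N) (Fin N) ℝ≥0∞) (n : ℕ) :
    eM L n 0 = if n = 0 then 1 else 0 := by
  cases n <;> simp [eM]

lemma eM_succ_apply (L : ℕ → Matrix (Fin N) (Fin N) ℝ≥0∞) (n a : ℕ) (ha : a ≠ 0) (i j : Fin N) :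
    eM L (n + 1) a i j = ∑' m, ∑ x, L m i x * eM L n (a - 1 + m) x j := by
  simp [eM, ha]

/-- The path-splitting event equivalence. -/
lemma hitEv_cons {n a : ℕ} (ha : a ≠ 0) (j : Fin N) (x : Fin N) (m : ℕ)
    (J' : Fin (n + 1) → Fin N) (C' : Fin n → ℕ) :
    ((Fin.cons x J', Fin.cons m C') ∈ hitEv (n + 1) a j) ↔
      ((J', C') ∈ hitEv n (a - 1 + m) j) := by
  obtain ⟨a₀, rfl⟩ : ∃ a₀, a = a₀ + 1 := ⟨a - 1, by omega⟩
  have hlast : (Fin.cons x J' : Fin (n + 2) → Fin N) (Fin.last (n + 1)) = J' (Fin.last n) := by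
    rw [← Fin.succ_last, Fin.cons_succ]
  constructor
  · rintro ⟨h1, h2, h3⟩
    refine ⟨?_, ?_, ?_⟩
    · intro k hk
      have := h1 (k + 1) (by omega)
      rw [S_cons] at this
      push_cast at this ⊢
      omega
    · rw [S_cons] at h2
      push_cast at h2 ⊢
      omega
    · simpa [hlast] using h3
  · rintro ⟨h1, h2, h3⟩
    refine ⟨?_, ?_, ?_⟩
    · intro k hk
      match k with
      | 0 =>
        rw [S_zero]
        push_cast
        omega
      | (k + 1) =>
        have := h1 k (by omega)
        rw [S_cons]
        push_cast at this ⊢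
        omega
    · rw [S_cons]
      push_cast at h2 ⊢
      omega
    · simpa [hlast] using h3

lemma ewt_cons (L : ℕ → Matrix (Fin N) (Fin N) ℝ≥0∞) (i x : Fin N) (m : ℕ) {n : ℕ}
    (J' : Fin (n + 1) → Fin N) (C' : Fin n → ℕ) :
    ewt L i (n + 1) (Fin.cons x J') (Fin.cons m C') =
      (if x = i then 1 else 0) * (L m x (J' 0) * ewt L (J' 0) n J' C') := by
  rw [ewt, ewt, Fin.prod_univ_succ]
  simp only [Fin.cons_zero, Fin.cons_succ, Fin.castSucc_zero, if_pos rfl, one_mul,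
    eq_self_iff_true, if_true, ← Fin.succ_castSucc]

/-- Splitting a path of length `n+1` into its first step and its tail. -/
def consPathEquiv (N n : ℕ) :
    ((Fin N × ℕ) × ((Fin (n + 1) → Fin N) × (Fin n → ℕ))) ≃
      ((Fin (n + 2) → Fin N) × (Fin (n + 1) → ℕ)) where
  toFun q := (Fin.cons q.1.1 q.2.1, Fin.cons q.1.2 q.2.2)
  invFun p := ((p.1 0, p.2 0), (Fin.tail p.1, Fin.tail p.2))
  left_inv q := by
    obtain ⟨⟨x, m⟩, ⟨J, C⟩⟩ := q
    simp [Fin.tail_cons]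
  right_inv p := by
    obtain ⟨J, C⟩ := p
    simp [Fin.cons_self_tail]

lemma eHit_inner (L : ℕ → Matrix (Fin N) (Fin N) ℝ≥0∞) (n A m : ℕ) (i j : Fin N) :
    ∑' p : (Fin (n + 1) → Fin N) × (Fin n → ℕ),
        L m i (p.1 0) * Set.indicator (hitEv n A j) (fun p => ewt L (p.1 0) n p.1 p.2) p
      = ∑ x, L m i x * eHit L n A x j := by
  have h1 : ∀ x : Fin N, L m i x * eHit L n A x j
      = ∑' p : (Fin (n + 1) → Fin N) × (Fin n → ℕ),
          L m i x * Set.indicator (hitEv n A j) (fun p => ewt L x n p.1 p.2) p := by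
    intro x; rw [eHit, ENNReal.tsum_mul_left]
  rw [Finset.sum_congr rfl fun x _ => h1 x, ← Summable.tsum_finsetSum (fun _ _ => ENNReal.summable)]
  apply tsum_congr
  intro p
  by_cases hp : p ∈ hitEv n A j
  · simp only [Set.indicator_of_mem hp]
    rw [Finset.sum_eq_single (p.1 0) (fun x _ hx => by simp [ewt, Ne.symm hx]) (by simp)]
  · simp [Set.indicator_of_notMem hp]

lemma eHit_succ (L : ℕ → Matrix (Fin N) (Fin N) ℝ≥0∞) (n a : ℕ) (ha : a ≠ 0) (i j : Fin N) :
    eHit L (n + 1) a i j = ∑' m, ∑ x, L m i x * eHit L n (a - 1 + m) x j := by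
  rw [eHit, ← Equiv.tsum_eq (consPathEquiv N n)]
  have key : ∀ q : (Fin N × ℕ) × ((Fin (n + 1) → Fin N) × (Fin n → ℕ)),
      Set.indicator (hitEv (n + 1) a j) (fun p => ewt L i (n + 1) p.1 p.2)
          (consPathEquiv N n q)
        = (if q.1.1 = i then 1 else 0) * (L q.1.2 q.1.1 (q.2.1 0) *
            Set.indicator (hitEv n (a - 1 + q.1.2) j)
              (fun p => ewt L (p.1 0) n p.1 p.2) q.2) := by
    rintro ⟨⟨x, m⟩, ⟨J', C'⟩⟩
    by_cases hm : (J', C') ∈ hitEv n (a - 1 + m) j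
    · rw [show consPathEquiv N n ((x, m), (J', C')) = (Fin.cons x J', Fin.cons m C') from rfl,
        Set.indicator_of_mem ((hitEv_cons ha j x m J' C').mpr hm),
        Set.indicator_of_mem hm]
      exact ewt_cons L i x m J' C'
    · rw [show consPathEquiv N n ((x, m), (J', C')) = (Fin.cons x J', Fin.cons m C') from rfl,
        Set.indicator_of_notMem (fun hmem => hm ((hitEv_cons ha j x m J' C').mp hmem)),
        Set.indicator_of_notMem hm]
      simp
  simp only [key]
  rw [ENNReal.tsum_prod']
  rw [show (∑' (y : Fin N × ℕ) (p' : (Fin (n + 1) → Fin N) × (Fin n → ℕ)),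
      (if y.1 = i then 1 else 0) * (L y.2 y.1 (p'.1 0) *
        Set.indicator (hitEv n (a - 1 + y.2) j) (fun p => ewt L (p.1 0) n p.1 p.2) p'))
    = ∑' (x : Fin N) (m : ℕ) (p' : (Fin (n + 1) → Fin N) × (Fin n → ℕ)),
      (if x = i then 1 else 0) * (L m x (p'.1 0) *
        Set.indicator (hitEv n (a - 1 + m) j) (fun p => ewt L (p.1 0) n p.1 p.2) p')
    from ENNReal.tsum_prod']
  rw [tsum_fintype]
  simp only [ite_mul, one_mul, zero_mul]
  rw [Finset.sum_eq_single i (fun x _ hx => by simp [hx]) (by simp)]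
  simp only [eq_self_iff_true, if_true]
  exact tsum_congr fun m => eHit_inner L n (a - 1 + m) m i j

/-- `eHit` satisfies the recursion defining `eM`. -/
lemma eHit_eq_eM (L : ℕ → Matrix (Fin N) (Fin N) ℝ≥0∞) :
    ∀ n a (i j : Fin N), eHit L n a i j = eM L n a i j := by
  intro n
  induction n with
  | zero =>
    intro a i j
    rw [eHit_zero]
    by_cases ha : a = 0 <;> simp [eM, ha]
  | succ n ih =>
    intro a i j
    by_cases ha : a = 0
    · subst ha
      have : ∀ p : (Fin (n + 2) → Fin N) × (Fin (n + 1) → ℕ),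
          Set.indicator (hitEv (n + 1) 0 j) (fun p => ewt L i (n + 1) p.1 p.2) p = 0 := by
        intro p
        apply Set.indicator_of_notMem
        rintro ⟨h1, -, -⟩
        have := h1 0 (by omega)
        rw [S_zero] at this
        omega
      rw [eHit]
      simp only [this, tsum_zero]
      simp [eM]
    · rw [eHit_succ L n a ha i j, eM_succ_apply L n a ha i j]
      exact tsum_congr fun m => Finset.sum_congr rfl fun x _ => by rw [ih]

lemma one_rowsum (i : Fin N) : ∑ j, (1 : Matrix (Fin N) (Fin N) ℝ≥0∞) i j = 1 := by
  simp [Matrix.one_apply]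

lemma eM_rowsum_le (L : ℕ → Matrix (Fin N) (Fin N) ℝ≥0∞)
    (hL : ∀ i, ∑' m, ∑ x, L m i x = 1) (T : ℕ) :
    ∀ a (i : Fin N), ∑ n ∈ Finset.range (T + 1), ∑ j, eM L n a i j ≤ 1 := by
  induction T with
  | zero =>
    intro a i
    rw [Finset.sum_range_one]
    by_cases ha : a = 0 <;> simp [eM, ha, one_rowsum]
  | succ T ih =>
    intro a i
    rw [Finset.sum_range_succ']
    by_cases ha : a = 0
    · subst ha
      simp only [eM_zero]
      simp [one_rowsum i]
    · have h0 : ∑ j, eM L 0 a i j = 0 := by simp [eM, ha]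
      rw [h0, add_zero]
      have hstep : ∀ n ∈ Finset.range (T + 1), ∑ j, eM L (n + 1) a i j
          = ∑' m, ∑ x, L m i x * ∑ j, eM L n (a - 1 + m) x j := by
        intro n _
        rw [Finset.sum_congr rfl fun j _ => eM_succ_apply L n a ha i j,
          ← Summable.tsum_finsetSum (fun _ _ => ENNReal.summable)]
        apply tsum_congr
        intro m
        rw [Finset.sum_comm]
        exact Finset.sum_congr rfl fun x _ => by rw [← Finset.mul_sum]
      rw [Finset.sum_congr rfl hstep, ← Summable.tsum_finsetSum (fun _ _ => ENNReal.summable)]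
      have : ∀ m : ℕ, ∑ n ∈ Finset.range (T + 1), ∑ x, L m i x * ∑ j, eM L n (a - 1 + m) x j
          ≤ ∑ x, L m i x := by
        intro m
        rw [Finset.sum_comm]
        apply Finset.sum_le_sum
        intro x _
        rw [← Finset.mul_sum]
        calc L m i x * ∑ n ∈ Finset.range (T + 1), ∑ j, eM L n (a - 1 + m) x j
            ≤ L m i x * 1 := by
              exact mul_le_mul_right (ih (a - 1 + m) x) _
          _ = L m i x := mul_one _
      calc (∑' m, ∑ n ∈ Finset.range (T + 1), ∑ x, L m i x * ∑ j, eM L n (a - 1 + m) x j)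
          ≤ ∑' m, ∑ x, L m i x := ENNReal.tsum_le_tsum this
        _ = 1 := hL i

lemma eM_tsum_le (L : ℕ → Matrix (Fin N) (Fin N) ℝ≥0∞)
    (hL : ∀ i, ∑' m, ∑ x, L m i x = 1) (a : ℕ) (i j : Fin N) :
    ∑' n, eM L n a i j ≤ 1 := by
  apply ENNReal.tsum_le_of_sum_range_le
  intro T
  calc ∑ n ∈ Finset.range T, eM L n a i j
      ≤ ∑ n ∈ Finset.range (T + 1), eM L n a i j :=
        Finset.sum_le_sum_of_subset (Finset.range_subset_range.2 (by omega))
    _ ≤ ∑ n ∈ Finset.range (T + 1), ∑ j', eM L n a i j' := by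
        apply Finset.sum_le_sum
        intro n _
        exact Finset.single_le_sum (fun j' _ => zero_le) (Finset.mem_univ j)
    _ ≤ 1 := eM_rowsum_le L hL T a i

/-- `eG L v a = Σ_n (ofReal v)^n eM L n a`. -/
def eG (L : ℕ → Matrix (Fin N) (Fin N) ℝ≥0∞) (v : ℝ) (a : ℕ) :
    Matrix (Fin N) (Fin N) ℝ≥0∞ :=
  Matrix.of fun i j => ∑' n, ENNReal.ofReal v ^ n * eM L n a i j

lemma eG_le_one (L : ℕ → Matrix (Fin N) (Fin N) ℝ≥0∞)
    (hL : ∀ i, ∑' m, ∑ x, L m i x = 1) {v : ℝ} (hv1 : v ≤ 1) (a : ℕ) (i j : Fin N) :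
    eG L v a i j ≤ 1 := by
  have h1 : ENNReal.ofReal v ≤ 1 := by
    rw [← ENNReal.ofReal_one]
    exact ENNReal.ofReal_le_ofReal hv1
  calc eG L v a i j ≤ ∑' n, eM L n a i j := by
        apply ENNReal.tsum_le_tsum
        intro n
        calc ENNReal.ofReal v ^ n * eM L n a i j
            ≤ 1 * eM L n a i j := mul_le_mul_left (pow_le_one' h1 n) _
          _ = eM L n a i j := one_mul _
    _ ≤ 1 := eM_tsum_le L hL a i j

lemma eG_ne_top (L : ℕ → Matrix (Fin N) (Fin N) ℝ≥0∞)
    (hL : ∀ i, ∑' m, ∑ x, L m i x = 1) {v : ℝ} (hv1 : v ≤ 1) (a : ℕ) (i j : Fin N) :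
    eG L v a i j ≠ ⊤ :=
  fun h => by simpa [h] using eG_le_one L hL hv1 a i j

lemma eG_zero (L : ℕ → Matrix (Fin N) (Fin N) ℝ≥0∞) (v : ℝ) :
    eG L v 0 = 1 := by
  ext i j
  rw [eG, Matrix.of_apply, tsum_eq_single 0 (fun n hn => by simp [eM_zero, hn])]
  simp [eM_zero]

lemma sum_mul_sum_comm {α : Type*} [Fintype α] (f : α → ℝ≥0∞) (E : α → α → ℝ≥0∞)
    (F : α → ℝ≥0∞) :
    ∑ x, f x * ∑ y, E x y * F y = ∑ y, (∑ x, f x * E x y) * F y := by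
  simp only [Finset.mul_sum, Finset.sum_mul, mul_assoc]
  exact Finset.sum_comm

lemma eM_conv (L : ℕ → Matrix (Fin N) (Fin N) ℝ≥0∞) :
    ∀ n a b, eM L n (a + b) = ∑ k ∈ Finset.range (n + 1), eM L k a * eM L (n - k) b := by
  intro n
  induction n with
  | zero =>
    intro a b
    rw [Finset.sum_range_one]
    by_cases ha : a = 0 <;> by_cases hb : b = 0 <;>
      simp [eM, ha, hb]
  | succ n ih =>
    intro a b
    by_cases ha : a = 0
    · subst ha
      rw [zero_add, Finset.sum_eq_single 0
        (fun k _ hk0 => by rw [eM_zero]; simp [hk0])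
        (fun h => absurd (Finset.mem_range.2 (by omega)) h)]
      simp [eM]
    · obtain ⟨a₀, rfl⟩ : ∃ a₀, a = a₀ + 1 := ⟨a - 1, by omega⟩
      have hne : a₀ + 1 + b ≠ 0 := by omega
      ext i j
      rw [Matrix.sum_apply, eM_succ_apply L n _ hne i j]
      have hstep : ∀ m : ℕ, ∑ x, L m i x * eM L n (a₀ + 1 + b - 1 + m) x j
          = ∑ k ∈ Finset.range (n + 1),
              ∑ x, L m i x * (eM L k (a₀ + m) * eM L (n - k) b) x j := by
        intro m
        rw [show a₀ + 1 + b - 1 + m = a₀ + m + b from by omega]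
        rw [Finset.sum_congr rfl fun x _ => by
          rw [ih (a₀ + m) b, Matrix.sum_apply, Finset.mul_sum]]
        exact Finset.sum_comm
      rw [tsum_congr hstep, Summable.tsum_finsetSum (fun _ _ => ENNReal.summable)]
      conv_rhs => rw [Finset.sum_range_succ']
      have hg0 : (eM L 0 (a₀ + 1) * eM L (n + 1 - 0) b) i j = 0 := by
        have : eM L 0 (a₀ + 1) = 0 := by simp [eM]
        rw [this, zero_mul]
        rfl
      rw [hg0, add_zero]
      apply Finset.sum_congr rfl
      intro k hk
      have hLHS : ∀ m : ℕ, ∑ x, L m i x * (eM L k (a₀ + m) * eM L (n - k) b) x j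
          = ∑ y, (∑ x, L m i x * eM L k (a₀ + m) x y) * eM L (n - k) b y j := by
        intro m
        rw [Finset.sum_congr rfl fun x _ => by rw [Matrix.mul_apply]]
        exact sum_mul_sum_comm _ _ _
      rw [tsum_congr hLHS, Summable.tsum_finsetSum (fun _ _ => ENNReal.summable)]
      rw [show n + 1 - (k + 1) = n - k from by omega, Matrix.mul_apply]
      apply Finset.sum_congr rfl
      intro y _
      rw [ENNReal.tsum_mul_right, eM_succ_apply L k (a₀ + 1) (by omega) i y,
        show a₀ + 1 - 1 = a₀ from rfl]

lemma enn_cauchy (f g : ℕ → ℝ≥0∞) :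
    (∑' k, f k) * (∑' l, g l) = ∑' n, ∑ k ∈ Finset.range (n + 1), f k * g (n - k) := by
  rw [← ENNReal.tsum_mul_right]
  rw [tsum_congr fun k => (ENNReal.tsum_mul_left (a := f k) (f := g)).symm]
  rw [← ENNReal.tsum_prod, ← Equiv.tsum_eq Finset.HasAntidiagonal.sigmaAntidiagonalEquivProd
    (fun p : ℕ × ℕ => f p.1 * g p.2)]
  rw [ENNReal.tsum_sigma' (fun x => f (Finset.HasAntidiagonal.sigmaAntidiagonalEquivProd x).1 *
    g (Finset.HasAntidiagonal.sigmaAntidiagonalEquivProd x).2)]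
  apply tsum_congr
  intro n
  rw [show (∑' kl : (Finset.HasAntidiagonal.antidiagonal n : Finset (ℕ × ℕ)),
        f (Finset.HasAntidiagonal.sigmaAntidiagonalEquivProd ⟨n, kl⟩).1 *
        g (Finset.HasAntidiagonal.sigmaAntidiagonalEquivProd ⟨n, kl⟩).2)
      = ∑' kl : (Finset.HasAntidiagonal.antidiagonal n : Finset (ℕ × ℕ)), f (kl : ℕ × ℕ).1 * g (kl : ℕ × ℕ).2
      from rfl]
  rw [Finset.tsum_subtype (Finset.HasAntidiagonal.antidiagonal n) (fun kl => f kl.1 * g kl.2)]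
  rw [Finset.Nat.sum_antidiagonal_eq_sum_range_succ_mk]

lemma eG_mul (L : ℕ → Matrix (Fin N) (Fin N) ℝ≥0∞) (v : ℝ) (a b : ℕ) :
    eG L v (a + b) = eG L v a * eG L v b := by
  ext i j
  rw [Matrix.mul_apply]
  have h1 : ∀ x : Fin N, eG L v a i x * eG L v b x j
      = ∑' n : ℕ, ENNReal.ofReal v ^ n *
          ∑ k ∈ Finset.range (n + 1), eM L k a i x * eM L (n - k) b x j := by
    intro x
    rw [eG, eG, Matrix.of_apply, Matrix.of_apply,
      enn_cauchy (fun k => ENNReal.ofReal v ^ k * eM L k a i x)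
        (fun l => ENNReal.ofReal v ^ l * eM L l b x j)]
    apply tsum_congr
    intro n
    rw [Finset.mul_sum]
    apply Finset.sum_congr rfl
    intro k hk
    have hk' : k < n + 1 := Finset.mem_range.mp hk
    have : ENNReal.ofReal v ^ k * ENNReal.ofReal v ^ (n - k) = ENNReal.ofReal v ^ n := by
      rw [← pow_add]
      congr 1
      exact Nat.add_sub_cancel' (by omega : k ≤ n)
    calc ENNReal.ofReal v ^ k * eM L k a i x * (ENNReal.ofReal v ^ (n - k) * eM L (n - k) b x j)
        = (ENNReal.ofReal v ^ k * ENNReal.ofReal v ^ (n - k)) *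
            (eM L k a i x * eM L (n - k) b x j) := by ring
      _ = ENNReal.ofReal v ^ n * (eM L k a i x * eM L (n - k) b x j) := by rw [this]
  rw [Finset.sum_congr rfl fun x _ => h1 x, ← Summable.tsum_finsetSum (fun _ _ => ENNReal.summable)]
  rw [eG, Matrix.of_apply]
  apply tsum_congr
  intro n
  rw [← Finset.mul_sum, eM_conv L n a b, Matrix.sum_apply]
  congr 1
  rw [Finset.sum_comm]
  apply Finset.sum_congr rfl
  intro k _
  rw [Matrix.mul_apply]

lemma eG_pow (L : ℕ → Matrix (Fin N) (Fin N) ℝ≥0∞) (v : ℝ) (m : ℕ) :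
    eG L v m = eG L v 1 ^ m := by
  induction m with
  | zero => rw [pow_zero]; exact eG_zero L v
  | succ m ih =>
    rw [show m + 1 = 1 + m from by omega, eG_mul, ih, add_comm 1 m, pow_succ']

set_option maxHeartbeats 1000000 in
lemma eG_lundberg (L : ℕ → Matrix (Fin N) (Fin N) ℝ≥0∞) (v : ℝ) (i j : Fin N) :
    eG L v 1 i j = ∑' m, ENNReal.ofReal v * (L m * eG L v 1 ^ m) i j := by
  have hmain : eG L v 1 i j
      = ∑' (n : ℕ) (m : ℕ), ENNReal.ofReal v *
          (ENNReal.ofReal v ^ n * ∑ x, L m i x * eM L n m x j) := by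
    rw [eG, Matrix.of_apply,
      tsum_eq_zero_add' (f := fun n : ℕ => ENNReal.ofReal v ^ n * eM L n 1 i j)
        ENNReal.summable]
    have h0 : ENNReal.ofReal v ^ 0 * eM L 0 1 i j = 0 := by simp [eM]
    rw [h0, zero_add]
    apply tsum_congr
    intro n
    rw [eM_succ_apply L n 1 one_ne_zero i j]
    simp only [Nat.sub_self, Nat.zero_add]
    rw [pow_succ', mul_assoc, ← ENNReal.tsum_mul_left, ← ENNReal.tsum_mul_left]
  rw [hmain, ENNReal.tsum_comm]
  apply tsum_congr
  intro m
  rw [ENNReal.tsum_mul_left]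
  congr 1
  rw [← eG_pow, Matrix.mul_apply]
  rw [tsum_congr fun n => by rw [Finset.mul_sum]]
  rw [Summable.tsum_finsetSum (fun _ _ => ENNReal.summable)]
  apply Finset.sum_congr rfl
  intro x _
  calc ∑' (b : ℕ), ENNReal.ofReal v ^ b * (L m i x * eM L b m x j)
      = ∑' (b : ℕ), L m i x * (ENNReal.ofReal v ^ b * eM L b m x j) :=
        tsum_congr fun b => by ring
    _ = L m i x * eG L v m x j := by rw [ENNReal.tsum_mul_left]; rfl

/-- `ℝ≥0∞`-valued version of real nonnegative jump matrices. -/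
def eL (Λ : ℕ → Matrix (Fin N) (Fin N) ℝ) : ℕ → Matrix (Fin N) (Fin N) ℝ≥0∞ :=
  fun m => Matrix.of fun i j => ENNReal.ofReal (Λ m i j)

lemma pathWeight_nonneg (Λ : ℕ → Matrix (Fin N) (Fin N) ℝ) (hΛ : ∀ m i j, 0 ≤ Λ m i j)
    (i : Fin N) (n : ℕ) (J : Fin (n + 1) → Fin N) (C : Fin n → ℕ) :
    0 ≤ pathWeight Λ (delta i) n J C := by
  apply mul_nonneg
  · rw [delta]; split_ifs <;> norm_num
  · exact Finset.prod_nonneg fun k _ => hΛ _ _ _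

lemma ewt_eq_ofReal (Λ : ℕ → Matrix (Fin N) (Fin N) ℝ) (hΛ : ∀ m i j, 0 ≤ Λ m i j)
    (i : Fin N) (n : ℕ) (J : Fin (n + 1) → Fin N) (C : Fin n → ℕ) :
    ewt (eL Λ) i n J C = ENNReal.ofReal (pathWeight Λ (delta i) n J C) := by
  rw [pathWeight, ENNReal.ofReal_mul (by rw [delta]; split_ifs <;> norm_num), ewt]
  congr 1
  · rw [delta]; split_ifs <;> simp
  · rw [ENNReal.ofReal_prod_of_nonneg (fun k _ => hΛ _ _ _)]
    rfl

lemma hitM_eq_toReal (Λ : ℕ → Matrix (Fin N) (Fin N) ℝ) (hΛ : ∀ m i j, 0 ≤ Λ m i j)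
    (n a : ℕ) (i j : Fin N) :
    hitM Λ n a i j = (eHit (eL Λ) n a i j).toReal := by
  have hne : ∀ p : (Fin (n + 1) → Fin N) × (Fin n → ℕ),
      Set.indicator (hitEv n a j) (fun p => ewt (eL Λ) i n p.1 p.2) p ≠ ⊤ := by
    intro p
    by_cases hp : p ∈ hitEv n a j
    · rw [Set.indicator_of_mem hp, ewt_eq_ofReal Λ hΛ]
      exact ENNReal.ofReal_ne_top
    · rw [Set.indicator_of_notMem hp]
      exact ENNReal.zero_ne_top
  rw [eHit, ENNReal.tsum_toReal_eq hne]
  have h0 : hitM Λ n a i j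
      = ∑' x : ↥(hitEv n a j),
          (fun p : (Fin (n + 1) → Fin N) × (Fin n → ℕ) => pathWeight Λ (delta i) n p.1 p.2)
            (x : (Fin (n + 1) → Fin N) × (Fin n → ℕ)) := rfl
  rw [h0, tsum_subtype (hitEv n a j) (fun p => pathWeight Λ (delta i) n p.1 p.2)]
  apply tsum_congr
  intro p
  by_cases hp : p ∈ hitEv n a j
  · rw [Set.indicator_of_mem hp, Set.indicator_of_mem hp, ewt_eq_ofReal Λ hΛ,
      ENNReal.toReal_ofReal (pathWeight_nonneg Λ hΛ i n p.1 p.2)]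
  · rw [Set.indicator_of_notMem hp, Set.indicator_of_notMem hp]
    simp

lemma eM_ne_top (L : ℕ → Matrix (Fin N) (Fin N) ℝ≥0∞)
    (hL : ∀ i, ∑' m, ∑ x, L m i x = 1) (n a : ℕ) (i j : Fin N) :
    eM L n a i j ≠ ⊤ := by
  intro h
  have h1 : (⊤ : ℝ≥0∞) ≤ 1 := by
    calc (⊤ : ℝ≥0∞) = eM L n a i j := h.symm
      _ ≤ ∑' n, eM L n a i j := ENNReal.le_tsum n
      _ ≤ 1 := eM_tsum_le L hL a i j
  simp at h1

lemma Gser_eq_toReal (Λ : ℕ → Matrix (Fin N) (Fin N) ℝ) (hΛ : ∀ m i j, 0 ≤ Λ m i j)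
    (hL : ∀ i, ∑' m, ∑ x, eL Λ m i x = 1) {v : ℝ} (hv0 : 0 ≤ v) (a : ℕ) (i j : Fin N) :
    Gser Λ v a i j = (eG (eL Λ) v a i j).toReal := by
  have hterm : ∀ n : ℕ, v ^ n * hitM Λ n a i j
      = ((ENNReal.ofReal v) ^ n * eM (eL Λ) n a i j).toReal := by
    intro n
    rw [ENNReal.toReal_mul, ENNReal.toReal_pow, ENNReal.toReal_ofReal hv0,
      ← eHit_eq_eM, ← hitM_eq_toReal Λ hΛ]
  have hne : ∀ n : ℕ, (ENNReal.ofReal v) ^ n * eM (eL Λ) n a i j ≠ ⊤ :=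
    fun n => ENNReal.mul_ne_top (ENNReal.pow_ne_top ENNReal.ofReal_ne_top)
      (eM_ne_top (eL Λ) hL n a i j)
  have h0 : Gser Λ v a i j = ∑' n : ℕ, v ^ n * hitM Λ n a i j := rfl
  rw [h0, tsum_congr hterm, ← ENNReal.tsum_toReal_eq hne]
  rfl

end Aux

/-- Lundberg's equation, left solution.  For `v ∈ (0,1]`, the matrix
`R_v = Δ_π⁻¹·G̃_vᵀ·Δ_π`, where `G̃_v = Σ_n v^n M̃(n,1)` is computed in the time-reversed
model, satisfies `R_v = v·Σ_{m=0}^∞ R_v^m·Λ(m)`, the series converging entrywise. -/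
theorem lundberg_left
    {N : ℕ} (hN : 1 ≤ N)
    (Λ : ℕ → Matrix (Fin N) (Fin N) ℝ) (P : Matrix (Fin N) (Fin N) ℝ)
    (hΛ : ∀ m i j, 0 ≤ Λ m i j)
    (hP : ∀ i j, HasSum (fun m => Λ m i j) (P i j))
    (hPstoch : ∀ i, ∑ j, P i j = 1)
    (π : Fin N → ℝ) (hπpos : ∀ i, 0 < π i) (hπsum : ∑ i, π i = 1)
    (hπP : ∀ j, ∑ i, π i * P i j = π j)
    (v : ℝ) (hv0 : 0 < v) (hv1 : v ≤ 1) :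
    ∀ i j, HasSum (fun m : ℕ => v * (Rmat Λ π v ^ m * Λ m) i j) (Rmat Λ π v i j) := by
  intro i j
  set Lt : ℕ → Matrix (Fin N) (Fin N) ℝ≥0∞ := eL (lamTilde Λ π) with hLtdef
  have hPnn : ∀ i j, 0 ≤ P i j := fun i j =>
    (hP i j).tsum_eq ▸ tsum_nonneg (fun m => hΛ m i j)
  have hTnn : ∀ m i j, 0 ≤ lamTilde Λ π m i j := fun m i j =>
    mul_nonneg (div_nonneg (hπpos j).le (hπpos i).le) (hΛ m j i)
  have hLsum : ∀ x, ∑' m, ∑ y, Lt m x y = 1 := by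
    intro x
    rw [Summable.tsum_finsetSum (fun _ _ => ENNReal.summable)]
    have hy : ∀ y : Fin N, ∑' m, Lt m x y = ENNReal.ofReal (π y / π x * P y x) := by
      intro y
      have hs : HasSum (fun m => π y / π x * Λ m y x) (π y / π x * P y x) :=
        (hP y x).mul_left _
      calc ∑' m, Lt m x y = ∑' m, ENNReal.ofReal (π y / π x * Λ m y x) := rfl
        _ = ENNReal.ofReal (∑' m, π y / π x * Λ m y x) :=
          (ENNReal.ofReal_tsum_of_nonneg
            (fun m => mul_nonneg (div_nonneg (hπpos y).le (hπpos x).le) (hΛ m y x))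
            hs.summable).symm
        _ = ENNReal.ofReal (π y / π x * P y x) := by rw [hs.tsum_eq]
    rw [Finset.sum_congr rfl fun y _ => hy y,
      ← ENNReal.ofReal_sum_of_nonneg
        (fun y _ => mul_nonneg (div_nonneg (hπpos y).le (hπpos x).le) (hPnn y x))]
    have hsum1 : ∑ y, π y / π x * P y x = 1 := by
      rw [Finset.sum_congr rfl fun y _ =>
        (by rw [div_mul_eq_mul_div, mul_comm (π y) (P y x), mul_comm ,div_eq_mul_inv] :
          π y / π x * P y x = π y * P y x * (π x)⁻¹)]
      rw [← Finset.sum_mul, hπP x, mul_inv_cancel₀ (hπpos x).ne']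
    rw [hsum1, ENNReal.ofReal_one]
  set ev : ℝ≥0∞ := ENNReal.ofReal v with hevdef
  set G1 : Matrix (Fin N) (Fin N) ℝ≥0∞ := eG Lt v 1 with hG1def
  have hGne : ∀ (a : ℕ) (i j : Fin N), eG Lt v a i j ≠ ⊤ :=
    fun a i j => eG_ne_top Lt hLsum hv1 a i j
  have hG1mne : ∀ (m : ℕ) (i j : Fin N), (G1 ^ m) i j ≠ ⊤ := by
    intro m i j
    rw [hG1def, ← eG_pow]
    exact hGne m i j
  set ePi : Fin N → ℝ≥0∞ := fun i => ENNReal.ofReal (π i) with hePidef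
  have hPi0 : ∀ i, ePi i ≠ 0 := fun i => (ENNReal.ofReal_pos.mpr (hπpos i)).ne'
  have hPit : ∀ i, ePi i ≠ ⊤ := fun i => ENNReal.ofReal_ne_top
  set eR : Matrix (Fin N) (Fin N) ℝ≥0∞ :=
    Matrix.of (fun i j => ePi j * (ePi i)⁻¹ * G1 j i) with heRdef
  have heRij : ∀ i j, eR i j = ePi j * (ePi i)⁻¹ * G1 j i := fun i j => rfl
  have heRne : ∀ i j, eR i j ≠ ⊤ := fun i j =>
    ENNReal.mul_ne_top (ENNReal.mul_ne_top (hPit j) (ENNReal.inv_ne_top.2 (hPi0 i)))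
      (hGne 1 j i)
  have hRtoReal : ∀ i j, Rmat Λ π v i j = (eR i j).toReal := by
    intro i j
    have h0 : Rmat Λ π v i j = π j / π i * Gser (lamTilde Λ π) v 1 j i := rfl
    rw [h0, Gser_eq_toReal (lamTilde Λ π) hTnn hLsum hv0.le 1 j i, heRij,
      ENNReal.toReal_mul, ENNReal.toReal_mul, ENNReal.toReal_inv]
    rw [show (ePi j).toReal = π j from ENNReal.toReal_ofReal (hπpos j).le,
      show (ePi i).toReal = π i from ENNReal.toReal_ofReal (hπpos i).le,
      div_eq_mul_inv]
  have hpow : ∀ (m : ℕ) (i j : Fin N), (eR ^ m) i j = ePi j * (ePi i)⁻¹ * (G1 ^ m) j i := by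
    intro m
    induction m with
    | zero =>
      intro i j
      rw [pow_zero, pow_zero]
      by_cases hij : i = j
      · subst hij
        simp [Matrix.one_apply, ENNReal.mul_inv_cancel (hPi0 i) (hPit i)]
      · simp [Matrix.one_apply, hij, Ne.symm hij]
    | succ m ih =>
      intro i j
      rw [pow_succ, Matrix.mul_apply]
      have hterm : ∀ x, (eR ^ m) i x * eR x j
          = (ePi x * (ePi x)⁻¹) * (ePi j * (ePi i)⁻¹ * (G1 j x * (G1 ^ m) x i)) := by
        intro x
        rw [ih, heRij]
        ring
      rw [Finset.sum_congr rfl fun x _ => hterm x,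
        Finset.sum_congr rfl fun x _ => by
          rw [ENNReal.mul_inv_cancel (hPi0 x) (hPit x), one_mul],
        ← Finset.mul_sum, pow_succ', Matrix.mul_apply]
  have heRmne : ∀ (m : ℕ) (i j : Fin N), (eR ^ m) i j ≠ ⊤ := fun m i j => by
    rw [hpow m i j]
    exact ENNReal.mul_ne_top
      (ENNReal.mul_ne_top (hPit j) (ENNReal.inv_ne_top.2 (hPi0 i))) (hG1mne m j i)
  have hcross : ∀ (m : ℕ) (i j : Fin N),
      (eR ^ m * eL Λ m) i j = ePi j * (ePi i)⁻¹ * (Lt m * G1 ^ m) j i := by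
    intro m i j
    rw [Matrix.mul_apply, Matrix.mul_apply, Finset.mul_sum]
    apply Finset.sum_congr rfl
    intro x _
    rw [hpow m i x]
    have hLt : Lt m j x = ePi x * (ePi j)⁻¹ * ENNReal.ofReal (Λ m x j) := by
      rw [show Lt m j x = ENNReal.ofReal (π x / π j * Λ m x j) from rfl,
        ENNReal.ofReal_mul (div_nonneg (hπpos x).le (hπpos j).le),
        ENNReal.ofReal_div_of_pos (hπpos j), div_eq_mul_inv]
    rw [hLt, show eL Λ m x j = ENNReal.ofReal (Λ m x j) from rfl]
    calc ePi x * (ePi i)⁻¹ * (G1 ^ m) x i * ENNReal.ofReal (Λ m x j)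
        = (ePi j * (ePi j)⁻¹) *
            (ePi x * (ePi i)⁻¹ * (G1 ^ m) x i * ENNReal.ofReal (Λ m x j)) := by
          rw [ENNReal.mul_inv_cancel (hPi0 j) (hPit j), one_mul]
      _ = ePi j * (ePi i)⁻¹ *
            (ePi x * (ePi j)⁻¹ * ENNReal.ofReal (Λ m x j) * (G1 ^ m) x i) := by ring
  have hmainE : ∑' m : ℕ, ev * (eR ^ m * eL Λ m) i j = eR i j := by
    rw [tsum_congr fun m => by rw [hcross m i j]]
    rw [tsum_congr fun m =>
      (by ring : ev * (ePi j * (ePi i)⁻¹ * (Lt m * G1 ^ m) j i)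
        = ePi j * (ePi i)⁻¹ * (ev * (Lt m * G1 ^ m) j i)), ENNReal.tsum_mul_left]
    rw [heRij i j, hG1def]
    rw [eG_lundberg Lt v j i]
  have hRpow : ∀ (m : ℕ) (i j : Fin N), (Rmat Λ π v ^ m) i j = ((eR ^ m) i j).toReal := by
    intro m
    induction m with
    | zero =>
      intro i j
      rw [pow_zero, pow_zero, Matrix.one_apply, Matrix.one_apply]
      split_ifs <;> simp
    | succ m ih =>
      intro i j
      rw [pow_succ, pow_succ, Matrix.mul_apply, Matrix.mul_apply,
        ENNReal.toReal_sum (fun x _ => ENNReal.mul_ne_top (heRmne m i x) (heRne x j))]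
      apply Finset.sum_congr rfl
      intro x _
      rw [ENNReal.toReal_mul, ih i x, hRtoReal x j]
  have hterm : ∀ m : ℕ, v * (Rmat Λ π v ^ m * Λ m) i j
      = (ev * (eR ^ m * eL Λ m) i j).toReal := by
    intro m
    rw [ENNReal.toReal_mul, hevdef, ENNReal.toReal_ofReal hv0.le]
    congr 1
    rw [Matrix.mul_apply, Matrix.mul_apply,
      ENNReal.toReal_sum (fun x _ => ENNReal.mul_ne_top (heRmne m i x)
        (show eL Λ m x j ≠ ⊤ from ENNReal.ofReal_ne_top))]
    apply Finset.sum_congr rfl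
    intro x _
    rw [ENNReal.toReal_mul, hRpow m i x,
      show (eL Λ m x j).toReal = Λ m x j from ENNReal.toReal_ofReal (hΛ m x j)]
  have hfun : (fun m : ℕ => v * (Rmat Λ π v ^ m * Λ m) i j)
      = fun m : ℕ => (ev * (eR ^ m * eL Λ m) i j).toReal := funext hterm
  have hTsumNe : ∑' m : ℕ, ev * (eR ^ m * eL Λ m) i j ≠ ⊤ := by
    rw [hmainE]
    exact heRne i j
  have hS : Summable (fun m : ℕ => v * (Rmat Λ π v ^ m * Λ m) i j) := by
    rw [hfun]
    exact ENNReal.summable_toReal hTsumNe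
  have hval : ∑' m : ℕ, v * (Rmat Λ π v ^ m * Λ m) i j = Rmat Λ π v i j := by
    rw [hfun, ← ENNReal.tsum_toReal_eq (fun m => ENNReal.mul_ne_top ENNReal.ofReal_ne_top
      (by rw [Matrix.mul_apply]
          exact (ENNReal.sum_lt_top.mpr fun x _ =>
            (ENNReal.mul_ne_top (heRmne m i x) ENNReal.ofReal_ne_top).lt_top).ne)),
      hmainE, hRtoReal i j]
  exact hval ▸ hS.hasSum



end CMB
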